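/- Every ideal maximal among countable strongly annihilated ideals of a commutative ring R is prime. -/
import Mathlib


/-- An ideal `I` is countable strongly annihilated if for each countable subset `S ⊆ I`
and each `b ∉ I` there exists `c` with `c * a = 0` for all `a ∈ S` but `c * b ≠ 0`. -/
def CountableStronglyAnnihilated {R : Type*} [CommRing R] (I : Ideal R) : Prop :=
  ∀ S : Set R, S.Countable → S ⊆ I → ∀ b ∉ I, ∃ c : R, (∀ a ∈ S, c * a = 0) ∧ c * b ≠ 0

/-- Every ideal maximal among (proper) countable strongly annihilated ideals is prime. -/
theorem stmt3 {R : Type*} [CommRing R] (I : Ideal R)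
    (hI : CountableStronglyAnnihilated I) (hproper : I ≠ ⊤)
    (hmax : ∀ J : Ideal R, CountableStronglyAnnihilated J → J ≠ ⊤ → I ≤ J → J = I) :
    I.IsPrime := by
  refine ⟨hproper, ?_⟩
  intro x y hxy
  by_cases hx : x ∈ I
  · exact Or.inl hx
  · right
    set J : Ideal R := I.colon (Ideal.span {x}) with hJ
    have memJ : ∀ a : R, a ∈ J ↔ a * x ∈ I := by
      intro a; rw [hJ, Ideal.mem_colon_span_singleton]
    have hIJ : I ≤ J := fun i hi => (memJ i).mpr (I.mul_mem_right x hi)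
    have hJtop : J ≠ ⊤ := by
      intro h
      apply hx
      have : (1 : R) ∈ J := h ▸ Submodule.mem_top
      simpa using (memJ 1).mp this
    have hJcsa : CountableStronglyAnnihilated J := by
      intro S hS hSJ b hb
      have hS' : ((fun a => a * x) '' S).Countable := hS.image _
      have hS'sub : (fun a => a * x) '' S ⊆ I := by
        rintro _ ⟨a, ha, rfl⟩
        exact (memJ a).mp (hSJ ha)
      have hbx : b * x ∉ I := fun h => hb ((memJ b).mpr h)
      obtain ⟨c, hc1, hc2⟩ := hI _ hS' hS'sub (b * x) hbx
      refine ⟨c * x, fun a ha => ?_, ?_⟩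
      · have := hc1 (a * x) ⟨a, ha, rfl⟩
        linear_combination this
      · intro h
        apply hc2
        linear_combination h
    have hJI : J = I := hmax J hJcsa hJtop hIJ
    have : y ∈ J := (memJ y).mpr (by rwa [mul_comm])
    rwa [hJI] at this
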